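/- Let X, Y, Z be complete separable metric spaces with Z perfect (no isolated points). Then the set of Borel probability measures P on X × Y × Z under which X is conditionally independent of Y given Z is dense in P(X × Y × Z) with respect to the weak topology. -/

import Mathlib

open MeasureTheory ProbabilityTheory Topology

open Filter Set Metric TopologicalSpace

open scoped Classical in
lemma aux_part {α : Type*} [MetricSpace α] [SeparableSpace α] [MeasurableSpace α]
    [BorelSpace α] [Nonempty α] {ε : ℝ} (hε : 0 < ε) :
    ∃ (c : ℕ → α) (idx : α → ℕ), Measurable idx ∧ ∀ a, dist a (c (idx a)) < ε := by
  obtain ⟨c, hc⟩ := exists_dense_seq α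
  set As : ℕ → Set α := disjointed (fun i => ball (c i) ε) with hAs
  have hcov : ∀ a, ∃ i, a ∈ As i := by
    intro a
    obtain ⟨i, hi⟩ := hc.exists_dist_lt a hε
    have : a ∈ ⋃ n, As n := by
      rw [hAs, iUnion_disjointed]
      exact mem_iUnion.2 ⟨i, mem_ball.2 hi⟩
    exact mem_iUnion.1 this
  set idx : α → ℕ := fun a => Nat.find (hcov a) with hidx
  have hmem : ∀ a, a ∈ As (idx a) := fun a => Nat.find_spec (hcov a)
  have hpre : ∀ i, idx ⁻¹' {i} = As i := by
    intro i
    ext a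
    simp only [mem_preimage, mem_singleton_iff]
    constructor
    · rintro rfl; exact hmem a
    · intro ha
      by_contra hne
      exact (disjoint_disjointed (fun i => ball (c i) ε) hne).le_bot ⟨hmem a, ha⟩
  refine ⟨c, idx, measurable_to_nat (fun a => ?_), fun a => ?_⟩
  · rw [hpre]
    exact MeasurableSet.disjointed (fun i => measurableSet_ball) _
  · have := disjointed_subset (fun i => ball (c i) ε) (idx a) (hmem a)
    exact mem_ball.1 this

lemma aux_pick {Z : Type*} [MetricSpace Z] (hZ : Perfect (Set.univ : Set Z))
    (U : ℕ → Set Z) (hU : ∀ j, IsOpen (U j)) (hne : ∀ j, (U j).Nonempty) :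
    ∃ w : ℕ → Z, Function.Injective w ∧ ∀ k, w k ∈ U (Nat.unpair k).1 := by
  have step : ∀ (j : ℕ) (F : Finset Z), ∃ z, z ∈ U j ∧ z ∉ F := by
    intro j F
    obtain ⟨z₀, hz₀⟩ := hne j
    have hacc : AccPt z₀ (Filter.principal (Set.univ : Set Z)) := hZ.acc z₀ (mem_univ z₀)
    have hnb : (𝓝[≠] z₀).NeBot := by
      rwa [AccPt, principal_univ, inf_top_eq] at hacc
    have hVopen : IsOpen (U j ∩ ((F : Set Z) \ {z₀})ᶜ) :=
      (hU j).inter (((F.finite_toSet.subset diff_subset).isClosed).isOpen_compl)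
    have hVz : (U j ∩ ((F : Set Z) \ {z₀})ᶜ) ∈ 𝓝 z₀ :=
      hVopen.mem_nhds ⟨hz₀, fun h => h.2 rfl⟩
    have : (U j ∩ ((F : Set Z) \ {z₀})ᶜ) ∩ {z₀}ᶜ ∈ 𝓝[≠] z₀ :=
      inter_mem (mem_nhdsWithin_of_mem_nhds hVz) self_mem_nhdsWithin
    obtain ⟨z, ⟨hzU, hzF⟩, hzne⟩ := Filter.nonempty_of_mem this
    refine ⟨z, hzU, fun hzF' => hzF ⟨hzF', hzne⟩⟩
  classical
  set pickf : Finset Z → ℕ → Z := fun F k => (step (Nat.unpair k).1 F).choose with hpickf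
  set g : ℕ → Finset Z := fun n => Nat.rec ∅ (fun k Fk => insert (pickf Fk k) Fk) n with hg
  set w : ℕ → Z := fun k => pickf (g k) k with hw
  have hw_mem : ∀ k, w k ∈ U (Nat.unpair k).1 := fun k => (step (Nat.unpair k).1 (g k)).choose_spec.1
  have hw_not : ∀ k, w k ∉ g k := fun k => (step (Nat.unpair k).1 (g k)).choose_spec.2
  have hg_succ : ∀ k, g (k + 1) = insert (w k) (g k) := fun k => rfl
  have hg_mono : Monotone g := monotone_nat_of_le_succ (fun k => by
    rw [hg_succ]; exact Finset.subset_insert _ _)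
  have key : ∀ k k', k < k' → w k ≠ w k' := by
    intro k k' hlt heq
    have h1 : w k ∈ g k' := hg_mono hlt (by rw [hg_succ]; exact Finset.mem_insert_self _ _)
    rw [heq] at h1
    exact hw_not k' h1
  refine ⟨w, fun k k' h => ?_, hw_mem⟩
  rcases lt_trichotomy k k' with hlt | heq | hgt
  · exact absurd h (key _ _ hlt)
  · exact heq
  · exact absurd h.symm (key _ _ hgt)


lemma aux_approx {X Z : Type*} [MetricSpace X] [SeparableSpace X] [MeasurableSpace X]
    [BorelSpace X] [Nonempty X]
    [MetricSpace Z] [SeparableSpace Z] [MeasurableSpace Z] [BorelSpace Z] [Nonempty Z]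
    (hZ : Perfect (Set.univ : Set Z)) {ε : ℝ} (hε : 0 < ε) :
    ∃ (ξ : X → X) (ζ : X → Z → Z),
      Measurable ξ ∧ Measurable (Function.uncurry ζ) ∧
      (∀ x, dist (ξ x) x ≤ 2 * ε) ∧ (∀ x z, dist (ζ x z) z ≤ 2 * ε) ∧
      (∀ s : Set X, MeasurableSet s → ∃ B : Set Z, MeasurableSet B ∧
        ∀ x z, (ξ x ∈ s ↔ ζ x z ∈ B)) := by
  obtain ⟨cX, idxX, hidxX, hdX⟩ := aux_part (α := X) hε
  obtain ⟨cZ, jdx, hjdx, hdZ⟩ := aux_part (α := Z) hε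
  obtain ⟨w, hw_inj, hw_mem⟩ := aux_pick hZ (fun j => ball (cZ j) ε)
    (fun j => isOpen_ball) (fun j => ⟨cZ j, mem_ball_self hε⟩)
  refine ⟨fun x => cX (idxX x), fun x z => w (Nat.pair (jdx z) (idxX x)),
    measurable_from_nat.comp hidxX, ?_, fun x => ?_, fun x z => ?_, fun s hs => ?_⟩
  · exact measurable_from_nat.comp
      ((measurable_of_countable (fun q : ℕ × ℕ => Nat.pair q.1 q.2)).comp
        ((hjdx.comp measurable_snd).prodMk (hidxX.comp measurable_fst)))
  · rw [dist_comm]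
    exact (hdX x).le.trans (by linarith)
  · have h1 : w (Nat.pair (jdx z) (idxX x)) ∈ ball (cZ (jdx z)) ε := by
      have := hw_mem (Nat.pair (jdx z) (idxX x))
      rwa [Nat.unpair_pair] at this
    calc dist (w (Nat.pair (jdx z) (idxX x))) z
        ≤ dist (w (Nat.pair (jdx z) (idxX x))) (cZ (jdx z)) + dist (cZ (jdx z)) z :=
          dist_triangle _ _ _
      _ ≤ ε + ε := add_le_add (mem_ball.1 h1).le (by rw [dist_comm]; exact (hdZ z).le)
      _ = 2 * ε := by ring
  · refine ⟨w '' {k | cX (Nat.unpair k).2 ∈ s}, ((Set.to_countable _).image w).measurableSet,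
      fun x z => ?_⟩
    constructor
    · intro hx
      exact ⟨Nat.pair (jdx z) (idxX x), by simpa [Nat.unpair_pair] using hx, rfl⟩
    · rintro ⟨k, hk, heq⟩
      have := hw_inj heq
      subst this
      simpa [Nat.unpair_pair] using hk


section AuxCI
variable {Ω β γ : Type*} {m' : MeasurableSpace Ω}
  {mΩ : MeasurableSpace Ω} [StandardBorelSpace Ω]
  {μ : Measure Ω} [IsFiniteMeasure μ]
  {f : Ω → β} {g : Ω → γ}

lemma aux_ci {mβ : MeasurableSpace β} {mγ : MeasurableSpace γ} (hm' : m' ≤ mΩ)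
    (hf : Measurable f) (hg : Measurable g)
    (h : ∀ s : Set β, MeasurableSet s → ∃ A : Set Ω, MeasurableSet[m'] A ∧
      ∀ᵐ ω ∂μ, ω ∈ f ⁻¹' s ↔ ω ∈ A) :
    CondIndepFun m' hm' f g μ := by
  haveI : SigmaFinite (μ.trim hm') := by
    have := isFiniteMeasure_trim (μ := μ) hm'
    infer_instance
  rw [condIndepFun_iff_condExp_inter_preimage_eq_mul hf hg]
  intro s t hs ht
  obtain ⟨A, hA, hAe⟩ := h s hs
  have hAm : MeasurableSet A := hm' _ hA
  have hind : ∀ (B C : Set Ω), (∀ᵐ ω ∂μ, ω ∈ B ↔ ω ∈ C) →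
      (B.indicator (fun _ => (1:ℝ))) =ᵐ[μ] (C.indicator (fun _ => (1:ℝ))) := by
    intro B C hBC
    filter_upwards [hBC] with ω hω
    by_cases h1 : ω ∈ B
    · simp [Set.indicator_of_mem, h1, hω.mp h1]
    · rw [Set.indicator_of_notMem h1, Set.indicator_of_notMem (fun h2 => h1 (hω.mpr h2))]
  have h1 : (μ⟦f ⁻¹' s ∩ g ⁻¹' t | m'⟧) =ᵐ[μ] (μ⟦A ∩ g ⁻¹' t | m'⟧) := by
    apply condExp_congr_ae
    apply hind
    filter_upwards [hAe] with ω hω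
    simp only [Set.mem_inter_iff]
    tauto
  have h2 : (μ⟦A ∩ g ⁻¹' t | m'⟧) =ᵐ[μ] A.indicator (μ⟦g ⁻¹' t | m'⟧) := by
    have := condExp_indicator (m := m') (μ := μ)
      (f := (g ⁻¹' t).indicator (fun _ => (1:ℝ)))
      ((integrable_const (1:ℝ)).indicator (hg ht)) hA
    rw [Set.indicator_indicator] at this
    exact this
  have h3 : (μ⟦f ⁻¹' s | m'⟧) =ᵐ[μ] A.indicator (fun _ => (1:ℝ)) := by
    refine (condExp_congr_ae (hind _ _ hAe)).trans ?_
    rw [condExp_of_stronglyMeasurable hm'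
      ((stronglyMeasurable_const (β := ℝ)).indicator hA)
      ((integrable_const (1:ℝ)).indicator hAm)]
  refine (h1.trans h2).trans ?_
  filter_upwards [h3] with ω hω
  rw [hω]
  by_cases hωA : ω ∈ A
  · simp [Set.indicator_of_mem hωA]
  · simp [Set.indicator_of_notMem hωA]

end AuxCI

/-- For Polish spaces `X, Y, Z` with `Z` perfect, the set of probability measures on
`X × Y × Z` under which the first coordinate is conditionally independent of the second
given the third is dense in the weak topology. -/
theorem stmt_12 {X Y Z : Type*}
    [MetricSpace X] [CompleteSpace X] [TopologicalSpace.SeparableSpace X]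
    [MeasurableSpace X] [BorelSpace X]
    [MetricSpace Y] [CompleteSpace Y] [TopologicalSpace.SeparableSpace Y]
    [MeasurableSpace Y] [BorelSpace Y]
    [MetricSpace Z] [CompleteSpace Z] [TopologicalSpace.SeparableSpace Z]
    [MeasurableSpace Z] [BorelSpace Z]
    (hZ : Perfect (Set.univ : Set Z)) :
    Dense {P : ProbabilityMeasure (X × Y × Z) |
      CondIndepFun (MeasurableSpace.comap (fun ω : X × Y × Z => ω.2.2) inferInstance)
        ((measurable_snd.comp measurable_snd).comap_le)
        (fun ω : X × Y × Z => ω.1) (fun ω : X × Y × Z => ω.2.1)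
        (P : Measure (X × Y × Z))} := by

  rcases isEmpty_or_nonempty (X × Y × Z) with hemp | hne
  · haveI : IsEmpty (ProbabilityMeasure (X × Y × Z)) := by
      constructor
      intro P
      have h1 : (P : Measure (X × Y × Z)) Set.univ = 1 := measure_univ
      rw [Set.univ_eq_empty_iff.2 hemp, measure_empty] at h1
      exact one_ne_zero h1.symm
    exact fun P => isEmptyElim P
  obtain ⟨⟨x₀, y₀, z₀⟩⟩ := hne
  haveI : Nonempty X := ⟨x₀⟩
  haveI : Nonempty Y := ⟨y₀⟩
  haveI : Nonempty Z := ⟨z₀⟩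
  intro P
  have hεn : ∀ n : ℕ, (0:ℝ) < 1 / (n + 1) := fun n => by positivity
  choose ξ ζ hξm hζm hξd hζd hdec using fun n : ℕ => aux_approx (X := X) (Z := Z) hZ (hεn n)
  set T : ℕ → X × Y × Z → X × Y × Z := fun n ω => (ξ n ω.1, ω.2.1, ζ n ω.1 ω.2.2) with hT
  have h22 : Measurable (fun ω : X × Y × Z => ω.2.2) := measurable_snd.comp measurable_snd
  have hTm : ∀ n, Measurable (T n) := by
    intro n
    refine ((hξm n).comp measurable_fst).prodMk (Measurable.prodMk ?_ ?_)
    · exact measurable_fst.comp measurable_snd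
    · exact (hζm n).comp (measurable_fst.prodMk h22)
  set Q : ℕ → ProbabilityMeasure (X × Y × Z) := fun n => P.map (hTm n).aemeasurable with hQ
  have hconv : Tendsto Q atTop (𝓝 P) := by
    rw [ProbabilityMeasure.tendsto_iff_forall_integral_tendsto]
    intro f
    have hint : ∀ n, ∫ ω, f ω ∂(Q n : Measure (X × Y × Z))
        = ∫ ω, f (T n ω) ∂(P : Measure (X × Y × Z)) := by
      intro n
      rw [hQ]
      simp only [ProbabilityMeasure.toMeasure_map]
      exact integral_map (hTm n).aemeasurable f.continuous.measurable.aestronglyMeasurable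
    simp_rw [hint]
    apply tendsto_integral_of_dominated_convergence (bound := fun _ => ‖f‖)
    · intro n
      exact (f.continuous.measurable.comp (hTm n)).aestronglyMeasurable
    · exact integrable_const _
    · intro n
      exact ae_of_all _ fun ω => f.norm_coe_le_norm _
    · apply ae_of_all
      intro ω
      apply (f.continuous.tendsto ω).comp
      rw [tendsto_iff_dist_tendsto_zero]
      have hb : ∀ n : ℕ, dist (T n ω) ω ≤ 2 * (1 / (n + 1)) := by
        intro n
        rw [hT]
        simp only [Prod.dist_eq]
        refine max_le (hξd n ω.1) (max_le ?_ (hζd n ω.1 ω.2.2))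
        simp only [dist_self]
        positivity
      have hlim : Tendsto (fun n : ℕ => 2 * (1 / ((n : ℝ) + 1))) atTop (𝓝 0) := by
        simpa using (tendsto_one_div_add_atTop_nhds_zero_nat (𝕜 := ℝ)).const_mul 2
      exact squeeze_zero (fun n => dist_nonneg) hb hlim
  refine mem_closure_of_tendsto hconv (Filter.Eventually.of_forall fun n => ?_)
  · refine aux_ci _ measurable_fst (measurable_fst.comp measurable_snd) ?_
    intro s hs
    obtain ⟨B, hB, hprop⟩ := hdec n s hs
    refine ⟨(fun ω : X × Y × Z => ω.2.2) ⁻¹' B, ⟨B, hB, rfl⟩, ?_⟩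
    have hms : MeasurableSet {ω : X × Y × Z | ω.1 ∈ s ↔ ω.2.2 ∈ B} := by
      have heq : {ω : X × Y × Z | ω.1 ∈ s ↔ ω.2.2 ∈ B} =
          ((fun ω : X × Y × Z => ω.1) ⁻¹' s ∩ (fun ω : X × Y × Z => ω.2.2) ⁻¹' B) ∪
          (((fun ω : X × Y × Z => ω.1) ⁻¹' s)ᶜ ∩ ((fun ω : X × Y × Z => ω.2.2) ⁻¹' B)ᶜ) := by
        ext ω
        by_cases h1 : ω.1 ∈ s <;> by_cases h2 : ω.2.2 ∈ B <;> simp [h1, h2]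
      rw [heq]
      exact ((measurable_fst hs).inter (h22 hB)).union
        (((measurable_fst hs).compl).inter ((h22 hB).compl))
    show ∀ᵐ ω ∂(Q n : Measure (X × Y × Z)), ω ∈ (fun ω : X × Y × Z => ω.1) ⁻¹' s ↔
      ω ∈ (fun ω : X × Y × Z => ω.2.2) ⁻¹' B
    rw [hQ]
    simp only [ProbabilityMeasure.toMeasure_map]
    exact (MeasureTheory.ae_map_iff (hTm n).aemeasurable hms).2
      (ae_of_all _ fun ω => hprop ω.1 ω.2.2)
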